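/- Let M = G_T · G_Tᵀ. Then M 0 0 = 1, and for every pair of indices (i,j) ≠ (0,0): M i j = 1 if and only if i and j are siblings, i.e., i ≠ j, i ≠ 0, j ≠ 0, and f i = f j. -/

import Mathlib

open Matrix Finset

set_option linter.unreachableTactic false in
set_option linter.unusedTactic false in
set_option maxHeartbeats 1000000 in
/-- Let `M = G_T ⬝ G_Tᵀ`. Then `M 0 0 = 1`, and for `(i,j) ≠ (0,0)`, `M i j = 1` iff
`i` and `j` are siblings (distinct non-root nodes with the same parent). -/
theorem structureMatrix_sibling_indicator (n : ℕ) [NeZero n]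
    (f : Fin n → Fin n) (hf0 : f 0 = 0) (hf : ∀ i : Fin n, i ≠ 0 → f i < i)
    (GT : Matrix (Fin n) (Fin n) ℝ)
    (hGT : ∀ i j, GT i j =
      if i = j then 1 else if i ≠ 0 ∧ j = f i then -1 else 0)
    (M : Matrix (Fin n) (Fin n) ℝ) (hM : M = GT * GTᵀ) :
    M 0 0 = 1 ∧
    ∀ i j : Fin n, (i, j) ≠ ((0 : Fin n), (0 : Fin n)) →
      (M i j = 1 ↔ (i ≠ j ∧ i ≠ 0 ∧ j ≠ 0 ∧ f i = f j)) := by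
  have hfne : ∀ i : Fin n, i ≠ 0 → f i ≠ i := fun i hi => (hf i hi).ne
  have hGT' : ∀ i k : Fin n, GT i k =
      (if k = i then (1:ℝ) else 0) + (if i ≠ 0 ∧ k = f i then (-1:ℝ) else 0) := by
    intro i k
    rw [hGT]
    by_cases hik : i = k
    · subst hik
      by_cases hi : i = 0
      · simp [hi, hf0]
      · simp [hi, (hfne i hi).symm]
    · by_cases hi : i = 0 <;> simp [hik, Ne.symm hik, hi, eq_comm]
  have key : ∀ i j : Fin n, M i j =
      (if i = j then (1:ℝ) else 0) + (if j ≠ 0 ∧ i = f j then -1 else 0)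
      + (if i ≠ 0 ∧ j = f i then -1 else 0)
      + (if i ≠ 0 ∧ j ≠ 0 ∧ f i = f j then 1 else 0) := by
    intro i j
    rw [hM, mul_apply]
    simp only [transpose_apply]
    simp only [hGT']
    by_cases hi : i = 0 <;> by_cases hj : j = 0 <;>
      simp [hi, hj, add_mul, mul_add, Finset.sum_add_distrib, ite_mul, mul_ite,
        Finset.sum_ite_eq', and_comm, eq_comm, add_assoc] <;>
      split_ifs <;> ring
  constructor
  · rw [key]
    simp
  · intro i j hij
    rw [key]
    have hij' : ¬ (i = 0 ∧ j = 0) := by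
      intro h; exact hij (by simp [h.1, h.2])
    have hi' := hfne i
    have hj' := hfne j
    by_cases hA : i = j
    · subst hA
      have hi0 : i ≠ 0 := fun h => hij' ⟨h, h⟩
      simp [hi0, Ne.symm (hi' hi0)]
    · rw [if_neg hA]
      split_ifs with hB hC hD <;> norm_num <;>
      first
        | tauto
        | (intro h; first
            | exact hi' h.2.1 (by grind)
            | exact hj' h.2.2.1 (by grind))
        | (intro _ h2' h3' h4'; first
            | exact hi' h2' (by grind)
            | exact hj' h3' (by grind))
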